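/- Let a, b, c be nonzero integers with gcd(a, b, c) = 1 and m := |c| > |a|, |b|. Let f : ℤ_m → [0, 1] be a function with f̂(0) = 1/2, where f̂(ξ) = (1/m)·Σ_{t ∈ ℤ_m} f(t)·e^{−2πiξt/m}. Then, interpreting the equation a·x + b·y + c·z = 0 modulo m (so that its solution set T ⊆ ℤ_m³ has exactly m² elements), (1/m²)·Σ_{(x,y,z) ∈ T} [f(x)f(y)f(z) + (1 − f(x))(1 − f(y))(1 − f(z))] = 1/4 + Σ_{t ∈ ℤ_m, a·t ≢ 0 and b·t ≢ 0 (mod m)} f̂(a·t)·f̂(b·t). -/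

import Mathlib

open Finset Complex

/-- The Fourier transform of `f : ℤ_m → ℝ`:
`f̂(ξ) = (1/m)·Σ_{t ∈ ℤ_m} f(t)·e^{−2πiξt/m}`. -/
noncomputable def ft (m : ℕ) [NeZero m] (f : ZMod m → ℝ) (ξ : ZMod m) : ℂ :=
  (1 / (m : ℂ)) * ∑ t : ZMod m,
    (f t : ℂ) * Complex.exp (-2 * Real.pi * Complex.I * (ξ.val : ℂ) * (t.val : ℂ) / m)

/-- The set of solutions `(x, y, z) ∈ ℤ_m³` to `a·x + b·y + c·z ≡ 0 (mod m)`. -/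
def solnsZ (a b c : ℤ) (m : ℕ) [NeZero m] : Finset (ZMod m × ZMod m × ZMod m) :=
  Finset.univ.filter fun p =>
    (a : ZMod m) * p.1 + (b : ZMod m) * p.2.1 + (c : ZMod m) * p.2.2 = 0

/-! ### Auxiliary character machinery -/

/-- The character `k ↦ e^{-2πik/m}`. -/
noncomputable def Ee (m : ℕ) (k : ℤ) : ℂ :=
  Complex.exp (-2 * Real.pi * Complex.I * k / m)

section Aux

variable (m : ℕ) [NeZero m]

lemma mC_ne : (m : ℂ) ≠ 0 := Nat.cast_ne_zero.mpr (NeZero.ne m)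

lemma Ee_add (j k : ℤ) : Ee m (j + k) = Ee m j * Ee m k := by
  unfold Ee
  rw [← Complex.exp_add]
  congr 1
  push_cast
  ring

lemma Ee_mul_m (q : ℤ) : Ee m ((m : ℤ) * q) = 1 := by
  unfold Ee
  have hm : (m : ℂ) ≠ 0 := mC_ne m
  have h : (-2 * (Real.pi : ℂ) * Complex.I * (((m : ℤ) * q : ℤ) : ℂ) / m)
      = ((-q : ℤ) : ℂ) * (2 * Real.pi * Complex.I) := by
    push_cast
    field_simp
  rw [h, Complex.exp_int_mul_two_pi_mul_I]

lemma Ee_congr {j k : ℤ} (h : (j : ZMod m) = (k : ZMod m)) : Ee m j = Ee m k := by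
  rw [ZMod.intCast_eq_intCast_iff] at h
  obtain ⟨q, hq⟩ := h.dvd
  have : j = k + (m : ℤ) * (-q) := by linarith [hq]
  rw [this, Ee_add, Ee_mul_m, mul_one]

lemma Ee_pow (k : ℤ) (n : ℕ) : Ee m (k * n) = (Ee m k) ^ n := by
  unfold Ee
  rw [← Complex.exp_nat_mul]
  congr 1
  push_cast
  ring

lemma Ee_pow_m (k : ℤ) : (Ee m k) ^ m = 1 := by
  rw [← Ee_pow, show (k * (m : ℕ) : ℤ) = (m : ℤ) * k by push_cast; ring, Ee_mul_m]

lemma sum_val_eq_range (g : ℕ → ℂ) :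
    ∑ x : ZMod m, g x.val = ∑ i ∈ Finset.range m, g i := by
  refine Finset.sum_nbij' (fun x => x.val) (fun i => (i : ZMod m)) ?_ ?_ ?_ ?_ ?_ <;>
    simp +contextual [ZMod.val_lt, ZMod.val_cast_of_lt, ZMod.natCast_val, Nat.mod_eq_of_lt]

lemma Ee_eq_one_iff (k : ℤ) : Ee m k = 1 ↔ (k : ZMod m) = 0 := by
  constructor
  · intro h1
    unfold Ee at h1
    rw [Complex.exp_eq_one_iff] at h1
    obtain ⟨n, hn⟩ := h1
    rw [ZMod.intCast_zmod_eq_zero_iff_dvd]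
    refine ⟨-n, ?_⟩
    have hm : (m : ℂ) ≠ 0 := mC_ne m
    have hfac : (2 * (Real.pi : ℂ) * Complex.I) ≠ 0 := by
      refine mul_ne_zero (mul_ne_zero two_ne_zero ?_) Complex.I_ne_zero
      exact_mod_cast Complex.ofReal_ne_zero.mpr Real.pi_ne_zero
    have key : (2 * (Real.pi : ℂ) * Complex.I) * (k : ℂ)
        = (2 * (Real.pi : ℂ) * Complex.I) * (((m : ℤ) * -n : ℤ) : ℂ) := by
      field_simp at hn
      push_cast
      linear_combination (-(2 * (Real.pi : ℂ) * Complex.I)) * hn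
    have := mul_left_cancel₀ hfac key
    exact_mod_cast this
  · intro h
    rw [ZMod.intCast_zmod_eq_zero_iff_dvd] at h
    obtain ⟨q, rfl⟩ := h
    exact Ee_mul_m m q

lemma sum_Ee (k : ℤ) :
    ∑ x : ZMod m, Ee m (k * x.val) = if (k : ZMod m) = 0 then (m : ℂ) else 0 := by
  have hr : ∑ x : ZMod m, Ee m (k * x.val) = ∑ i ∈ Finset.range m, (Ee m k) ^ i := by
    rw [← sum_val_eq_range m (fun n => (Ee m k) ^ n)]
    exact Finset.sum_congr rfl fun x _ => Ee_pow m k x.val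
  rw [hr]
  by_cases h : (k : ZMod m) = 0
  · have h1 : Ee m k = 1 := (Ee_eq_one_iff m k).mpr h
    simp [h, h1]
  · have h1 : Ee m k ≠ 1 := fun hh => h ((Ee_eq_one_iff m k).mp hh)
    rw [geom_sum_eq h1, Ee_pow_m]
    simp [h]

lemma ft_eq (f : ZMod m → ℝ) (ξ : ZMod m) :
    ft m f ξ = (1 / (m : ℂ)) * ∑ t : ZMod m, (f t : ℂ) * Ee m ((ξ.val : ℤ) * (t.val : ℤ)) := by
  unfold ft Ee
  congr 1
  refine Finset.sum_congr rfl fun t _ => ?_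
  congr 1
  push_cast
  ring

lemma cast_val_eq_self (v : ZMod m) : (((v.val : ℤ)) : ZMod m) = v := by
  push_cast
  rw [ZMod.natCast_val, ZMod.cast_id]

lemma ft_one (ξ : ZMod m) : ft m (fun _ => (1 : ℝ)) ξ = if ξ = 0 then 1 else 0 := by
  rw [ft_eq]
  simp only [Complex.ofReal_one, one_mul]
  rw [sum_Ee m (ξ.val : ℤ)]
  have hc : (((ξ.val : ℤ)) : ZMod m) = 0 ↔ ξ = 0 := by rw [cast_val_eq_self]
  by_cases h : ξ = 0
  · rw [if_pos (hc.mpr h), if_pos h]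
    field_simp
    exact div_self (mC_ne m)
  · rw [if_neg (fun hh => h (hc.mp hh)), if_neg h, mul_zero]

lemma ft_one_sub (f : ZMod m → ℝ) (ξ : ZMod m) :
    ft m (fun x => 1 - f x) ξ = (if ξ = 0 then 1 else 0) - ft m f ξ := by
  rw [← ft_one m ξ]
  unfold ft
  rw [← mul_sub, ← Finset.sum_sub_distrib]
  congr 1
  refine Finset.sum_congr rfl fun t _ => ?_
  push_cast
  ring

/-- The key Fourier identity: sums over the solution set factor through `ft`. -/
lemma key_identity (a b c : ℤ) (f₁ f₂ f₃ : ZMod m → ℝ) :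
    ∑ p ∈ solnsZ a b c m, ((f₁ p.1 : ℂ) * (f₂ p.2.1 : ℂ) * (f₃ p.2.2 : ℂ)) =
    (m : ℂ) ^ 2 * ∑ t : ZMod m,
      ft m f₁ ((a : ZMod m) * t) * ft m f₂ ((b : ZMod m) * t) * ft m f₃ ((c : ZMod m) * t) := by
  have hm : (m : ℂ) ≠ 0 := mC_ne m
  -- notation
  set F : ZMod m × ZMod m × ZMod m → ℂ :=
    fun p => (f₁ p.1 : ℂ) * (f₂ p.2.1 : ℂ) * (f₃ p.2.2 : ℂ) with hF
  set L : ZMod m × ZMod m × ZMod m → ZMod m :=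
    fun p => (a : ZMod m) * p.1 + (b : ZMod m) * p.2.1 + (c : ZMod m) * p.2.2 with hL
  have step1 : ∑ p ∈ solnsZ a b c m, F p
      = ∑ p : ZMod m × ZMod m × ZMod m,
          (1 / (m : ℂ)) * ∑ t : ZMod m, F p * Ee m (((L p).val : ℤ) * (t.val : ℤ)) := by
    unfold solnsZ
    rw [Finset.sum_filter]
    refine Finset.sum_congr rfl fun p _ => ?_
    rw [← Finset.mul_sum, sum_Ee m ((L p).val : ℤ)]
    have hc : ((((L p).val : ℤ)) : ZMod m) = 0 ↔ L p = 0 := by rw [cast_val_eq_self]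
    by_cases h : L p = 0
    · rw [if_pos (hc.mpr h), if_pos (by exact h)]
      field_simp
    · rw [if_neg (fun hh => h (hc.mp hh)), if_neg (by exact h)]
      ring
  have factor : ∀ (t : ZMod m) (p : ZMod m × ZMod m × ZMod m),
      F p * Ee m (((L p).val : ℤ) * (t.val : ℤ))
      = ((f₁ p.1 : ℂ) * Ee m (a * (t.val : ℤ) * (p.1.val : ℤ)))
        * ((f₂ p.2.1 : ℂ) * Ee m (b * (t.val : ℤ) * (p.2.1.val : ℤ)))
        * ((f₃ p.2.2 : ℂ) * Ee m (c * (t.val : ℤ) * (p.2.2.val : ℤ))) := by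
    intro t p
    have hE : Ee m (((L p).val : ℤ) * (t.val : ℤ))
        = Ee m (a * (t.val : ℤ) * (p.1.val : ℤ) + (b * (t.val : ℤ) * (p.2.1.val : ℤ)
            + c * (t.val : ℤ) * (p.2.2.val : ℤ))) := by
      apply Ee_congr
      push_cast
      simp only [ZMod.natCast_val, ZMod.cast_id]
      simp only [hL]
      ring
    rw [hE, Ee_add, Ee_add]
    ring
  have sum_factor : ∀ (g : ZMod m → ℝ) (d : ℤ) (t : ZMod m),
      ∑ x : ZMod m, (g x : ℂ) * Ee m (d * (t.val : ℤ) * (x.val : ℤ))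
        = (m : ℂ) * ft m g ((d : ZMod m) * t) := by
    intro g d t
    rw [ft_eq, ← mul_assoc, mul_one_div, div_self hm, one_mul]
    refine Finset.sum_congr rfl fun x _ => ?_
    congr 1
    apply Ee_congr
    push_cast
    simp only [ZMod.natCast_val, ZMod.cast_id]
    try ring
  rw [step1, ← Finset.mul_sum, Finset.sum_comm]
  rw [Finset.mul_sum]
  have step2 : ∀ t : ZMod m,
      (1 / (m : ℂ)) * ∑ p : ZMod m × ZMod m × ZMod m,
          F p * Ee m (((L p).val : ℤ) * (t.val : ℤ))
      = (m : ℂ) ^ 2 * (ft m f₁ ((a : ZMod m) * t) * ft m f₂ ((b : ZMod m) * t)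
          * ft m f₃ ((c : ZMod m) * t)) := by
    intro t
    have : ∑ p : ZMod m × ZMod m × ZMod m, F p * Ee m (((L p).val : ℤ) * (t.val : ℤ))
        = (∑ x : ZMod m, (f₁ x : ℂ) * Ee m (a * (t.val : ℤ) * (x.val : ℤ)))
          * (∑ y : ZMod m, (f₂ y : ℂ) * Ee m (b * (t.val : ℤ) * (y.val : ℤ)))
          * (∑ z : ZMod m, (f₃ z : ℂ) * Ee m (c * (t.val : ℤ) * (z.val : ℤ))) := by
      rw [Fintype.sum_prod_type]
      simp_rw [Fintype.sum_prod_type, factor t]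
      simp_rw [← Finset.mul_sum, ← Finset.sum_mul]
      rw [← Finset.sum_mul_sum]
    rw [this, sum_factor f₁ a t, sum_factor f₂ b t, sum_factor f₃ c t]
    field_simp
  rw [Finset.sum_congr rfl fun t _ => step2 t, ← Finset.mul_sum]

lemma only_zero (a b c : ℤ) (hgcd : Int.gcd a (Int.gcd b c) = 1)
    (hm : (m : ℤ) = |c|) (t : ZMod m)
    (hat : (a : ZMod m) * t = 0) (hbt : (b : ZMod m) * t = 0) : t = 0 := by
  set s : ℤ := (t.val : ℤ) with hs
  have hts : ((s : ZMod m)) = t := cast_val_eq_self m t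
  have hda : (m : ℤ) ∣ a * s := by
    rw [← ZMod.intCast_zmod_eq_zero_iff_dvd]
    push_cast
    rw [hts]
    exact hat
  have hdb : (m : ℤ) ∣ b * s := by
    rw [← ZMod.intCast_zmod_eq_zero_iff_dvd]
    push_cast
    rw [hts]
    exact hbt
  have hdc : (m : ℤ) ∣ c * s := by
    have : (m : ℤ) ∣ c := by rw [hm]; exact (abs_dvd _ _).mpr dvd_rfl
    exact Dvd.dvd.mul_right this s
  have hbc : (m : ℤ) ∣ (((b * s).gcd (c * s) : ℕ) : ℤ) := Int.dvd_coe_gcd hdb hdc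
  have habc : (m : ℤ) ∣ (((a * s).gcd ((((b * s).gcd (c * s) : ℕ) : ℤ)) : ℕ) : ℤ) :=
    Int.dvd_coe_gcd hda hbc
  have hsnn : (0 : ℤ) ≤ s := Int.natCast_nonneg _
  have h1 : (b * s).gcd (c * s) = b.gcd c * s.natAbs := Int.gcd_mul_right b s c
  have h2 : (a * s).gcd ((((b * s).gcd (c * s) : ℕ) : ℤ)) = s.natAbs := by
    rw [h1]
    have : (((b.gcd c * s.natAbs : ℕ)) : ℤ) = (b.gcd c : ℤ) * s := by
      push_cast
      rw [abs_of_nonneg hsnn]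
    rw [this]
    rw [Int.gcd_mul_right a s (b.gcd c : ℤ)]
    rw [show (a.gcd ((b.gcd c : ℕ) : ℤ)) = 1 from hgcd, one_mul]
  rw [h2] at habc
  have hdvd : m ∣ s.natAbs := by exact_mod_cast habc
  have hlt : s.natAbs < m := by
    rw [hs, Int.natAbs_natCast]
    exact ZMod.val_lt t
  have : s.natAbs = 0 := Nat.eq_zero_of_dvd_of_lt hdvd hlt
  have hv : t.val = 0 := by
    rw [hs, Int.natAbs_natCast] at this
    exact this
  exact (ZMod.val_eq_zero t).mp hv

end Aux

theorem expected_mono_proportion_fourier (a b c : ℤ)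
    (ha : a ≠ 0) (hb : b ≠ 0) (hc : c ≠ 0)
    (hgcd : Int.gcd a (Int.gcd b c) = 1) (m : ℕ) [NeZero m]
    (hm : (m : ℤ) = |c|) (hma : a.natAbs < m) (hmb : b.natAbs < m)
    (f : ZMod m → ℝ) (hf : ∀ t, f t ∈ Set.Icc (0 : ℝ) 1)
    (hf0 : ft m f 0 = 1 / 2) :
    (solnsZ a b c m).card = m ^ 2 ∧
    (1 / (m : ℂ) ^ 2) * ∑ p ∈ solnsZ a b c m,
        ((f p.1 * f p.2.1 * f p.2.2
          + (1 - f p.1) * (1 - f p.2.1) * (1 - f p.2.2) : ℝ) : ℂ) =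
      1 / 4 + ∑ t ∈ Finset.univ.filter
          (fun t : ZMod m => (a : ZMod m) * t ≠ 0 ∧ (b : ZMod m) * t ≠ 0),
        ft m f ((a : ZMod m) * t) * ft m f ((b : ZMod m) * t) := by
  have hmC : (m : ℂ) ≠ 0 := mC_ne m
  have hc0 : (c : ZMod m) = 0 := by
    rw [ZMod.intCast_zmod_eq_zero_iff_dvd, hm]
    exact (abs_dvd _ _).mpr dvd_rfl
  set g : ZMod m → ℝ := fun x => 1 - f x with hg
  have hgft : ∀ ξ : ZMod m, ft m g ξ = (if ξ = 0 then 1 else 0) - ft m f ξ :=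
    fun ξ => ft_one_sub m f ξ
  have hg0 : ft m g 0 = 1 / 2 := by rw [hgft 0, if_pos rfl, hf0]; norm_num
  -- Part 1: cardinality
  have card_eq : (solnsZ a b c m).card = m ^ 2 := by
    have h1 := key_identity m a b c (fun _ => (1 : ℝ)) (fun _ => 1) (fun _ => 1)
    simp only [Complex.ofReal_one, one_mul, mul_one] at h1
    rw [Finset.sum_const, nsmul_eq_mul, mul_one] at h1
    have h2 : ∑ t : ZMod m,
        ft m (fun _ => (1 : ℝ)) ((a : ZMod m) * t) * ft m (fun _ => (1 : ℝ)) ((b : ZMod m) * t)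
          * ft m (fun _ => (1 : ℝ)) ((c : ZMod m) * t)
        = ∑ t : ZMod m, (if t = 0 then (1 : ℂ) else 0) := by
      refine Finset.sum_congr rfl fun t _ => ?_
      rw [ft_one, ft_one, ft_one]
      by_cases hat : (a : ZMod m) * t = 0
      · by_cases hbt : (b : ZMod m) * t = 0
        · have ht0 : t = 0 := only_zero m a b c hgcd hm t hat hbt
          simp [ht0]
        · have ht0 : t ≠ 0 := fun h => hbt (by simp [h])
          simp [hat, hbt, ht0]
      · have ht0 : t ≠ 0 := fun h => hat (by simp [h])
        simp [hat, ht0]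
    rw [h2, Finset.sum_ite_eq' Finset.univ (0 : ZMod m) (fun _ => (1 : ℂ))] at h1
    simp only [Finset.mem_univ, if_true, mul_one] at h1
    exact_mod_cast h1
  refine ⟨card_eq, ?_⟩
  -- Part 2
  have split : ∑ p ∈ solnsZ a b c m,
      ((f p.1 * f p.2.1 * f p.2.2 + (1 - f p.1) * (1 - f p.2.1) * (1 - f p.2.2) : ℝ) : ℂ)
      = (∑ p ∈ solnsZ a b c m, ((f p.1 : ℂ) * (f p.2.1 : ℂ) * (f p.2.2 : ℂ)))
        + (∑ p ∈ solnsZ a b c m, ((g p.1 : ℂ) * (g p.2.1 : ℂ) * (g p.2.2 : ℂ))) := by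
    rw [← Finset.sum_add_distrib]
    refine Finset.sum_congr rfl fun p _ => ?_
    simp only [hg]
    push_cast
    ring
  rw [split, key_identity m a b c f f f, key_identity m a b c g g g]
  have hfc : ∀ t : ZMod m, ft m f ((c : ZMod m) * t) = 1 / 2 := by
    intro t; rw [hc0, zero_mul, hf0]
  have hgc : ∀ t : ZMod m, ft m g ((c : ZMod m) * t) = 1 / 2 := by
    intro t; rw [hc0, zero_mul, hg0]
  have main : (1 / (m : ℂ) ^ 2) * ((m : ℂ) ^ 2 * ∑ t : ZMod m,
        ft m f ((a : ZMod m) * t) * ft m f ((b : ZMod m) * t) * ft m f ((c : ZMod m) * t)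
      + (m : ℂ) ^ 2 * ∑ t : ZMod m,
        ft m g ((a : ZMod m) * t) * ft m g ((b : ZMod m) * t) * ft m g ((c : ZMod m) * t))
      = ∑ t : ZMod m,
        (ft m f ((a : ZMod m) * t) * ft m f ((b : ZMod m) * t) * (1 / 2)
          + ft m g ((a : ZMod m) * t) * ft m g ((b : ZMod m) * t) * (1 / 2)) := by
    simp only [hfc, hgc]
    rw [Finset.sum_add_distrib]
    field_simp
    try ring
  rw [main]
  -- split the sum over the filter
  rw [← Finset.sum_filter_add_sum_filter_not Finset.univ
    (fun t : ZMod m => (a : ZMod m) * t ≠ 0 ∧ (b : ZMod m) * t ≠ 0)]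
  have hP : ∑ t ∈ Finset.univ.filter
      (fun t : ZMod m => (a : ZMod m) * t ≠ 0 ∧ (b : ZMod m) * t ≠ 0),
      (ft m f ((a : ZMod m) * t) * ft m f ((b : ZMod m) * t) * (1 / 2)
        + ft m g ((a : ZMod m) * t) * ft m g ((b : ZMod m) * t) * (1 / 2))
      = ∑ t ∈ Finset.univ.filter
        (fun t : ZMod m => (a : ZMod m) * t ≠ 0 ∧ (b : ZMod m) * t ≠ 0),
        ft m f ((a : ZMod m) * t) * ft m f ((b : ZMod m) * t) := by
    refine Finset.sum_congr rfl fun t ht => ?_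
    rw [Finset.mem_filter] at ht
    obtain ⟨-, hat, hbt⟩ := ht
    rw [hgft, hgft, if_neg hat, if_neg hbt]
    ring
  have hNP : ∑ t ∈ Finset.univ.filter
      (fun t : ZMod m => ¬((a : ZMod m) * t ≠ 0 ∧ (b : ZMod m) * t ≠ 0)),
      (ft m f ((a : ZMod m) * t) * ft m f ((b : ZMod m) * t) * (1 / 2)
        + ft m g ((a : ZMod m) * t) * ft m g ((b : ZMod m) * t) * (1 / 2))
      = 1 / 4 := by
    have congr1 : ∀ t ∈ Finset.univ.filter
        (fun t : ZMod m => ¬((a : ZMod m) * t ≠ 0 ∧ (b : ZMod m) * t ≠ 0)),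
        (ft m f ((a : ZMod m) * t) * ft m f ((b : ZMod m) * t) * (1 / 2)
          + ft m g ((a : ZMod m) * t) * ft m g ((b : ZMod m) * t) * (1 / 2))
        = if t = 0 then (1 / 4 : ℂ) else 0 := by
      intro t ht
      rw [Finset.mem_filter] at ht
      obtain ⟨-, hcond⟩ := ht
      push_neg at hcond
      by_cases hat : (a : ZMod m) * t = 0
      · by_cases hbt : (b : ZMod m) * t = 0
        · have ht0 : t = 0 := only_zero m a b c hgcd hm t hat hbt
          rw [if_pos ht0, ht0]
          simp only [mul_zero]
          rw [hf0, hg0]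
          norm_num
        · have ht0 : t ≠ 0 := fun h => hbt (by simp [h])
          rw [if_neg ht0, hat, hf0, hg0, hgft, if_neg hbt]
          ring
      · have hbt : (b : ZMod m) * t = 0 := hcond hat
        have ht0 : t ≠ 0 := fun h => hat (by simp [h])
        rw [if_neg ht0, hbt, hf0, hg0, hgft ((a : ZMod m) * t), if_neg hat]
        ring
    rw [Finset.sum_congr rfl congr1, Finset.sum_ite_eq' _ (0 : ZMod m) (fun _ => (1 / 4 : ℂ))]
    rw [if_pos]
    simp
  rw [hP, hNP]
  ring
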